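/- Let S ⊆ R be a multiplicatively closed set. Then the conductor of an ideal localizes: S⁻¹C(I) = C(S⁻¹I), where S⁻¹I is the extension of I to the localization S⁻¹R. -/

import Mathlib

noncomputable section

universe u v

/-- The `R`-algebra map `φ : T = R[y_i : i ∈ ι] → R[t]` sending `y_i ↦ f i · t`. -/
def reesHom {R : Type u} [CommRing R] {ι : Type v} (f : ι → R) :
    MvPolynomial ι R →ₐ[R] Polynomial R :=
  MvPolynomial.aeval fun i => Polynomial.C (f i) * Polynomial.X

/-- `J`, the defining ideal of the Rees algebra of the ideal generated by `f`. -/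
def reesJ {R : Type u} [CommRing R] {ι : Type v} (f : ι → R) :
    Ideal (MvPolynomial ι R) :=
  RingHom.ker (reesHom f)

/-- `L`, the ideal of `T` generated by the linear relations `∑ aᵢ yᵢ` with `∑ aᵢ fᵢ = 0`. -/
def linRel {R : Type u} [CommRing R] {ι : Type v} (f : ι → R) :
    Ideal (MvPolynomial ι R) :=
  Ideal.span {p | ∃ a : ι →₀ R, (a.sum fun i r => r * f i) = 0 ∧
    p = a.sum fun i r => MvPolynomial.C r * MvPolynomial.X i}

/-- The conductor `C(I) = L :_R J = {r ∈ R : r J ⊆ L}`. -/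
def conductorIdeal {R : Type u} [CommRing R] {ι : Type v} (f : ι → R) : Ideal R :=
  Submodule.colon (Submodule.restrictScalars R (linRel f))
    (Submodule.restrictScalars R (reesJ f))

/-- The ideal generated by `f` is of linear type if `J = L`. -/
def IsLinearType {R : Type u} [CommRing R] {ι : Type v} (f : ι → R) : Prop :=
  reesJ f = linRel f

end

attribute [local instance] MvPolynomial.algebraMvPolynomial

section Aux
open MvPolynomial
variable {R : Type} [CommRing R] {m : ℕ} (f : Fin m → R)
variable (S : Submonoid R) (Rₛ : Type) [CommRing Rₛ] [Algebra R Rₛ] [IsLocalization S Rₛ]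

lemma reesHom_map (q : MvPolynomial (Fin m) R) :
    reesHom (fun j => algebraMap R Rₛ (f j)) (MvPolynomial.map (algebraMap R Rₛ) q)
      = Polynomial.map (algebraMap R Rₛ) (reesHom f q) := by
  induction q using MvPolynomial.induction_on with
  | C r => simp [reesHom, MvPolynomial.aeval_C, Polynomial.algebraMap_eq]
  | add p q hp hq => simp [hp, hq]
  | mul_X p i hp => simp only [reesHom] at hp; simp [reesHom, hp]

end Aux

section Aux2
open MvPolynomial
variable {R : Type} [CommRing R] {m : ℕ} (f : Fin m → R)
variable (S : Submonoid R) (Rₛ : Type) [CommRing Rₛ] [Algebra R Rₛ]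

lemma linRel_map_le :
    Ideal.map (MvPolynomial.map (algebraMap R Rₛ)) (linRel f)
      ≤ linRel (fun j => algebraMap R Rₛ (f j)) := by
  rw [Ideal.map_le_iff_le_comap, linRel, Ideal.span_le]
  rintro p ⟨a, ha, rfl⟩
  refine Ideal.subset_span ⟨a.mapRange (algebraMap R Rₛ) (map_zero _), ?_, ?_⟩
  · rw [Finsupp.sum_mapRange_index (by simp)]
    have : (a.sum fun i r => algebraMap R Rₛ r * algebraMap R Rₛ (f i))
        = algebraMap R Rₛ (a.sum fun i r => r * f i) := by
      rw [map_finsuppSum]; simp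
    rw [this, ha, map_zero]
  · rw [map_finsuppSum, Finsupp.sum_mapRange_index (by simp)]
    simp

lemma linRel_le_map [IsLocalization S Rₛ] :
    linRel (fun j => algebraMap R Rₛ (f j))
      ≤ Ideal.map (MvPolynomial.map (algebraMap R Rₛ)) (linRel f) := by
  rw [linRel, Ideal.span_le]
  rintro p ⟨a, ha, rfl⟩
  rw [Finsupp.sum_fintype _ _ (by simp)] at ha
  rw [Finsupp.sum_fintype _ _ (by simp)]
  choose rs hrs using fun i => IsLocalization.surj S (a i)
  set r : Fin m → R := fun i => (rs i).1 with hr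
  set s : Fin m → S := fun i => (rs i).2 with hs
  set sP : S := ∏ i, s i with hsP
  set b : Fin m → R := fun i => r i * ∏ j ∈ Finset.univ.erase i, (s j : R) with hb
  have key : ∀ i, algebraMap R Rₛ (b i) = a i * algebraMap R Rₛ (sP : R) := by
    intro i
    have hc : (sP : R) = (s i : R) * ∏ j ∈ Finset.univ.erase i, (s j : R) := by
      rw [hsP, Submonoid.coe_finset_prod,
        Finset.mul_prod_erase Finset.univ (fun j => (s j : R)) (Finset.mem_univ i)]
    rw [hb, hc, map_mul, map_mul, ← mul_assoc, hrs i]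
  have hrel : algebraMap R Rₛ (∑ i, b i * f i) = 0 := by
    rw [map_sum]
    have : ∀ i, algebraMap R Rₛ (b i * f i) = algebraMap R Rₛ (sP : R) * (a i * algebraMap R Rₛ (f i)) := by
      intro i; rw [map_mul, key i]; ring
    rw [Finset.sum_congr rfl fun i _ => this i, ← Finset.mul_sum, ha, mul_zero]
  rw [show (0 : Rₛ) = algebraMap R Rₛ 0 by simp] at hrel
  obtain ⟨u, hu⟩ := (IsLocalization.eq_iff_exists S Rₛ).mp hrel
  rw [mul_zero] at hu
  set bF : Fin m →₀ R := Finsupp.equivFunOnFinite.symm (fun i => (u : R) * b i) with hbF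
  have hbF' : ∀ i, bF i = (u : R) * b i := fun i => rfl
  have hq : (bF.sum fun i r => C r * X i) ∈ linRel f := by
    refine Ideal.subset_span ⟨bF, ?_, rfl⟩
    rw [Finsupp.sum_fintype _ _ (by simp)]
    calc ∑ i, bF i * f i = (u : R) * ∑ i, b i * f i := by
          rw [Finset.mul_sum]; exact Finset.sum_congr rfl fun i _ => by rw [hbF']; ring
      _ = 0 := hu
  have hmem := Ideal.mem_map_of_mem (MvPolynomial.map (algebraMap R Rₛ)) hq
  have heq : MvPolynomial.map (algebraMap R Rₛ) (bF.sum fun i r => C r * X i)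
      = C (algebraMap R Rₛ ((u : R) * (sP : R))) * ∑ i, C (a i) * X i := by
    rw [map_finsuppSum, Finsupp.sum_fintype _ _ (by simp), Finset.mul_sum]
    refine Finset.sum_congr rfl fun i _ => ?_
    simp only [map_mul, map_C, map_X, hbF', key, C_mul]
    ring
  rw [heq] at hmem
  rw [SetLike.mem_coe]
  have hunit : IsUnit (C (algebraMap R Rₛ ((u : R) * (sP : R))) : MvPolynomial (Fin m) Rₛ) := by
    have : (C ((u : R) * (sP : R)) : MvPolynomial (Fin m) R) ∈ S.map (C : R →+* _) :=
      ⟨(u : R) * (sP : R), mul_mem u.2 sP.2, rfl⟩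
    have := IsLocalization.map_units (M := S.map (C : R →+* MvPolynomial (Fin m) R))
      (MvPolynomial (Fin m) Rₛ) ⟨_, this⟩
    simpa using this
  exact (Ideal.unit_mul_mem_iff_mem _ hunit).mp hmem

end Aux2


section Aux3
open MvPolynomial
variable {R : Type} [CommRing R] {m : ℕ} (f : Fin m → R)
variable (S : Submonoid R) (Rₛ : Type) [CommRing Rₛ] [Algebra R Rₛ]

lemma mem_conductorIdeal_iff {R : Type u} [CommRing R] {ι : Type v} (f : ι → R) (r : R) :
    r ∈ conductorIdeal f ↔ ∀ p ∈ reesJ f, MvPolynomial.C r * p ∈ linRel f := by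
  simp only [conductorIdeal, Submodule.mem_colon, SetLike.mem_coe, Submodule.restrictScalars_mem,
    MvPolynomial.smul_eq_C_mul]

lemma exists_C_mul_mem [IsLocalization S Rₛ] (K : Ideal (MvPolynomial (Fin m) R))
    (q : MvPolynomial (Fin m) R)
    (h : MvPolynomial.map (algebraMap R Rₛ) q ∈
      Ideal.map (MvPolynomial.map (algebraMap R Rₛ)) K) :
    ∃ u : S, MvPolynomial.C (u : R) * q ∈ K := by
  obtain ⟨⟨k, w⟩, hw⟩ := (IsLocalization.mem_map_algebraMap_iff
    (S.map (C : R →+* MvPolynomial (Fin m) R)) (MvPolynomial (Fin m) Rₛ)).mp h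
  have hw' : algebraMap (MvPolynomial (Fin m) R) (MvPolynomial (Fin m) Rₛ) (q * (w : MvPolynomial (Fin m) R))
      = algebraMap _ _ (k : MvPolynomial (Fin m) R) := by
    rw [map_mul]; exact hw
  obtain ⟨c, hc⟩ := (IsLocalization.eq_iff_exists
    (S.map (C : R →+* MvPolynomial (Fin m) R)) (MvPolynomial (Fin m) Rₛ)).mp hw'
  obtain ⟨u1, hu1, hcu1⟩ := c.2
  obtain ⟨u2, hu2, hwu2⟩ := w.2
  refine ⟨⟨u1 * u2, mul_mem hu1 hu2⟩, ?_⟩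
  have : (C (u1 * u2) : MvPolynomial (Fin m) R) * q = (c : MvPolynomial (Fin m) R) * (q * w) := by
    rw [← hcu1, ← hwu2, C_mul]; ring
  rw [this, hc]
  exact Ideal.mul_mem_left _ _ k.2

end Aux3

section Aux4
open MvPolynomial
variable {R : Type} [CommRing R] {m : ℕ} (f : Fin m → R)
variable (S : Submonoid R) (Rₛ : Type) [CommRing Rₛ] [Algebra R Rₛ] [IsLocalization S Rₛ]

lemma poly_map_eq_zero {P : Polynomial R} (h : Polynomial.map (algebraMap R Rₛ) P = 0) :
    ∃ u : S, Polynomial.C (u : R) * P = 0 := by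
  have hcoeff : ∀ n, algebraMap R Rₛ (P.coeff n) = 0 := by
    intro n; rw [← Polynomial.coeff_map, h, Polynomial.coeff_zero]
  choose c hc using fun n => (IsLocalization.map_eq_zero_iff S Rₛ _).mp (hcoeff n)
  refine ⟨∏ n ∈ P.support, c n, ?_⟩
  ext n
  rw [Polynomial.coeff_C_mul, Polynomial.coeff_zero]
  by_cases hn : n ∈ P.support
  · rw [Submonoid.coe_finset_prod, ← Finset.mul_prod_erase P.support (fun k => ((c k : R))) hn,
      mul_comm ((c n : R)) _, mul_assoc, hc n, mul_zero]
  · rw [Polynomial.notMem_support_iff.mp hn, mul_zero]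

lemma mem_reesJ_map {q : MvPolynomial (Fin m) R} (hq : q ∈ reesJ f) :
    MvPolynomial.map (algebraMap R Rₛ) q ∈ reesJ (fun j => algebraMap R Rₛ (f j)) := by
  rw [reesJ, RingHom.mem_ker] at hq ⊢
  rw [show ((reesHom (fun j => algebraMap R Rₛ (f j)) : MvPolynomial (Fin m) Rₛ →ₐ[Rₛ] Polynomial Rₛ) :
    MvPolynomial (Fin m) Rₛ → Polynomial Rₛ) (MvPolynomial.map (algebraMap R Rₛ) q)
    = Polynomial.map (algebraMap R Rₛ) (reesHom f q) from reesHom_map f Rₛ q, hq, Polynomial.map_zero]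

end Aux4

section MainProof
open MvPolynomial

/-- The conductor of an ideal localizes: for a multiplicatively
closed set `S ⊆ R`, `S⁻¹C(I) = C(S⁻¹I)`. -/
theorem stmt_0 {R : Type} [CommRing R] [IsNoetherianRing R] {m : ℕ}
    (f : Fin m → R) (I : Ideal R) (hI : I = Ideal.span (Set.range f))
    (S : Submonoid R) (Rₛ : Type) [CommRing Rₛ] [Algebra R Rₛ] [IsLocalization S Rₛ] :
    Ideal.map (algebraMap R Rₛ) (conductorIdeal f) =
      conductorIdeal (fun j => algebraMap R Rₛ (f j)) := by
  apply le_antisymm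
  · rw [Ideal.map_le_iff_le_comap]
    intro r hr
    rw [Ideal.mem_comap, mem_conductorIdeal_iff]
    intro p hp
    -- clear denominators on p
    obtain ⟨⟨q, w⟩, hw⟩ := IsLocalization.surj
      (S.map (C : R →+* MvPolynomial (Fin m) R)) p
    obtain ⟨w0, hw0, hww⟩ := w.2
    have hw' : p * MvPolynomial.map (algebraMap R Rₛ) (C w0)
        = MvPolynomial.map (algebraMap R Rₛ) q := by
      rw [show MvPolynomial.map (algebraMap R Rₛ) (C w0)
        = algebraMap (MvPolynomial (Fin m) R) (MvPolynomial (Fin m) Rₛ) (w : MvPolynomial (Fin m) R)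
        from by rw [← hww]; rfl]
      exact hw
    -- the numerator q lands in the kernel after clearing one more denominator
    have h1 : Polynomial.map (algebraMap R Rₛ) (reesHom f q) = 0 := by
      rw [← reesHom_map f Rₛ q, ← hw', map_mul]
      rw [reesJ, RingHom.mem_ker] at hp
      rw [hp, zero_mul]
    obtain ⟨u, hu⟩ := poly_map_eq_zero S Rₛ h1
    have hq : C (u : R) * q ∈ reesJ f := by
      rw [reesJ, RingHom.mem_ker, map_mul]
      rw [show (reesHom f) (C (u : R)) = Polynomial.C (u : R) from aeval_C _ _]
      exact hu
    have h2 : C r * (C (u : R) * q) ∈ linRel f :=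
      (mem_conductorIdeal_iff f r).mp hr _ hq
    have h3 : MvPolynomial.map (algebraMap R Rₛ) (C r * (C (u : R) * q))
        ∈ linRel (fun j => algebraMap R Rₛ (f j)) :=
      linRel_map_le f Rₛ (Ideal.mem_map_of_mem _ h2)
    have heq : MvPolynomial.map (algebraMap R Rₛ) (C r * (C (u : R) * q))
        = C (algebraMap R Rₛ ((u : R) * w0)) * (C (algebraMap R Rₛ r) * p) := by
      simp only [map_mul, map_C, C_mul, ← hw']
      ring
    rw [heq] at h3
    have hunit : IsUnit (C (algebraMap R Rₛ ((u : R) * w0)) : MvPolynomial (Fin m) Rₛ) := by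
      have hm : (C ((u : R) * w0) : MvPolynomial (Fin m) R) ∈ S.map (C : R →+* _) :=
        ⟨(u : R) * w0, mul_mem u.2 hw0, rfl⟩
      have := IsLocalization.map_units (M := S.map (C : R →+* MvPolynomial (Fin m) R))
        (MvPolynomial (Fin m) Rₛ) ⟨_, hm⟩
      simpa using this
    exact (Ideal.unit_mul_mem_iff_mem _ hunit).mp h3
  · classical
    intro x hx
    rw [mem_conductorIdeal_iff] at hx
    obtain ⟨⟨r, s⟩, hxs⟩ := IsLocalization.surj S x
    have hxs' : x * algebraMap R Rₛ (s : R) = algebraMap R Rₛ r := hxs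
    obtain ⟨G, hG⟩ := IsNoetherian.noetherian (reesJ f)
    have hstep : ∀ g ∈ G, ∃ u : S, C ((u : R) * r) * g ∈ linRel f := by
      intro g hg
      have hgJ : g ∈ reesJ f := by rw [← hG]; exact Submodule.subset_span hg
      have h1 : C x * MvPolynomial.map (algebraMap R Rₛ) g
          ∈ linRel (fun j => algebraMap R Rₛ (f j)) := by
        exact hx _ (mem_reesJ_map f Rₛ hgJ)
      have h2 : MvPolynomial.map (algebraMap R Rₛ) (C r * g)
          ∈ linRel (fun j => algebraMap R Rₛ (f j)) := by
        have h3 := Ideal.mul_mem_left _ (C (algebraMap R Rₛ (s : R))) h1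
        rw [show C (algebraMap R Rₛ (s : R)) * (C x * MvPolynomial.map (algebraMap R Rₛ) g)
          = C (x * algebraMap R Rₛ (s : R)) * MvPolynomial.map (algebraMap R Rₛ) g from by
            rw [C_mul]; ring] at h3
        -- h3 : C (x * alg s) * map g ∈ linRel
        rw [hxs'] at h3
        rw [map_mul, map_C]
        exact h3
      have h4 := linRel_le_map f S Rₛ h2
      obtain ⟨u, hu⟩ := exists_C_mul_mem S Rₛ _ _ h4
      refine ⟨u, ?_⟩
      rwa [C_mul, mul_assoc]
    choose uu huu using hstep
    set U : S := ∏ g ∈ G.attach, uu g g.2 with hU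
    have hUmem : ∀ g ∈ G, C ((U : R) * r) * g ∈ linRel f := by
      intro g hg
      have hco : (U : R) = (uu g hg : R) * ∏ h ∈ G.attach.erase ⟨g, hg⟩, (uu h h.2 : R) := by
        rw [hU, Submonoid.coe_finset_prod,
          ← Finset.mul_prod_erase G.attach (fun h => ((uu h h.2 : S) : R)) (Finset.mem_attach G ⟨g, hg⟩)]
      rw [hco, show ((uu g hg : R) * ∏ h ∈ G.attach.erase ⟨g, hg⟩, (uu h h.2 : R)) * r
        = (∏ h ∈ G.attach.erase ⟨g, hg⟩, (uu h h.2 : R)) * ((uu g hg : R) * r) from by ring,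
        C_mul, mul_assoc]
      exact Ideal.mul_mem_left _ _ (huu g hg)
    have hUr : (U : R) * r ∈ conductorIdeal f := by
      rw [mem_conductorIdeal_iff]
      intro p hp
      rw [← hG] at hp
      induction hp using Submodule.span_induction with
      | mem g hg => exact hUmem g hg
      | zero => rw [mul_zero]; exact Ideal.zero_mem _
      | add p q hp hq hp' hq' => rw [mul_add]; exact Ideal.add_mem _ hp' hq'
      | smul t p hp hp' =>
          rw [smul_eq_mul, mul_left_comm]
          exact Ideal.mul_mem_left _ _ hp'
    have hmap := Ideal.mem_map_of_mem (algebraMap R Rₛ) hUr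
    have hunit : IsUnit (algebraMap R Rₛ ((U : R) * (s : R))) :=
      IsLocalization.map_units Rₛ (⟨(U : R) * (s : R), mul_mem U.2 s.2⟩ : S)
    have hxe : x * algebraMap R Rₛ ((U : R) * (s : R)) = algebraMap R Rₛ ((U : R) * r) := by
      rw [map_mul, map_mul, ← hxs']; ring
    rw [← hxe] at hmap
    exact (Ideal.mul_unit_mem_iff_mem _ hunit).mp hmap

end MainProof
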